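/- Suppose γ(k) ~ C k^{2d-1} as k → ∞ for constants C > 0 and d ∈ (0, 1/2), and γ is a symmetric autocovariance function. Then Var[ȳ_T] = (1/T) Σ_{k=1-T}^{T-1}(1 - |k|/T) γ(k) satisfies T^{1-2d} Var[ȳ_T] → 2C/(2d(2d+1)) as T → ∞. -/

import Mathlib

open Filter Real Finset

lemma sum_range_rpow_sub_bound (q : ℝ) (hq : -1 < q) (hq0 : q ≠ 0) :
    ∀ n : ℕ, 1 ≤ n → |(∑ j ∈ Finset.range n, (j:ℝ)^q) - (n:ℝ)^(q+1)/(q+1)|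
      ≤ 1/(q+1) + 1 + (n:ℝ)^q := by
  intro n hn
  have hq1 : (0:ℝ) < q + 1 := by linarith
  have hfz : ((0:ℕ):ℝ)^q = 0 := by simp [Real.zero_rpow hq0]
  have hrange : (∑ j ∈ Finset.range n, (j:ℝ)^q) = ∑ j ∈ Finset.Ico 1 n, (j:ℝ)^q := by
    rw [Finset.range_eq_Ico]
    refine (Finset.sum_subset (Finset.Ico_subset_Ico (by norm_num) le_rfl) ?_).symm
    intro x hx hnx
    have : x = 0 := by simp only [Finset.mem_Ico] at hx hnx; omega
    simp [this, Real.zero_rpow hq0]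
  have hnq : (0:ℝ) ≤ (n:ℝ)^q := Real.rpow_nonneg (Nat.cast_nonneg n) q
  have hdiv : (0:ℝ) < 1/(q+1) := by positivity
  rcases le_or_gt q 0 with hq2 | hq2
  · -- antitone case
    have hanti : AntitoneOn (fun x : ℝ => x ^ q) (Set.Icc ((1:ℕ):ℝ) ((n:ℕ):ℝ)) := by
      intro x hx y hy hxy
      have h1x : (0:ℝ) < x := lt_of_lt_of_le one_pos (by simpa using hx.1)
      exact Real.rpow_le_rpow_of_nonpos h1x hxy hq2
    have hint : (∫ x in ((1:ℕ):ℝ)..((n:ℕ):ℝ), x ^ q)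
        = (n:ℝ)^(q+1)/(q+1) - 1/(q+1) := by
      rw [integral_rpow (Or.inl hq)]
      push_cast
      rw [Real.one_rpow]
      ring
    have hlow := hanti.integral_le_sum_Ico (by exact_mod_cast hn)
    have hupp := hanti.sum_le_integral_Ico (by exact_mod_cast hn)
    rw [hint] at hlow hupp
    have hshift : (∑ i ∈ Finset.Ico 1 n, ((i + 1 : ℕ):ℝ)^q)
        = (∑ j ∈ Finset.Ico 1 n, (j:ℝ)^q) + (n:ℝ)^q - 1 := by
      have htop := Finset.sum_Ico_succ_top (by omega : 1 ≤ n) (fun j : ℕ => (j:ℝ)^q)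
      have h2 : (∑ i ∈ Finset.Ico 1 n, ((i + 1 : ℕ):ℝ)^q)
          = ∑ j ∈ Finset.Ico 2 (n+1), (j:ℝ)^q := by
        rw [← Finset.sum_Ico_add' (fun j : ℕ => (j:ℝ)^q) 1 n 1]
      have hbot := Finset.sum_eq_sum_Ico_succ_bot (by omega : 1 < n + 1)
        (fun j : ℕ => (j:ℝ)^q)
      simp only [Nat.cast_one, Real.one_rpow] at hbot
      rw [h2]
      rw [show (2:ℕ) = 1 + 1 from rfl] at *
      rw [htop] at hbot
      linarith
    rw [hshift] at hupp
    rw [hrange, abs_le]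
    constructor <;> linarith
  · -- monotone case
    have hmono : MonotoneOn (fun x : ℝ => x ^ q) (Set.Icc ((0:ℕ):ℝ) ((n:ℕ):ℝ)) := by
      intro x hx y hy hxy
      exact Real.rpow_le_rpow (by simpa using hx.1) hxy hq2.le
    have hint : (∫ x in ((0:ℕ):ℝ)..((n:ℕ):ℝ), x ^ q) = (n:ℝ)^(q+1)/(q+1) := by
      rw [integral_rpow (Or.inl hq)]
      push_cast
      rw [Real.zero_rpow (by linarith : q + 1 ≠ 0)]
      ring
    have hlow := hmono.sum_le_integral_Ico (Nat.zero_le n)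
    have hupp := hmono.integral_le_sum_Ico (Nat.zero_le n)
    rw [hint] at hlow hupp
    have hl2 : (∑ x ∈ Finset.Ico 0 n, ((x:ℕ):ℝ)^q) = ∑ j ∈ Finset.range n, (j:ℝ)^q := by
      rw [Finset.range_eq_Ico]
    have hshift : (∑ i ∈ Finset.Ico 0 n, ((i + 1 : ℕ):ℝ)^q)
        = (∑ j ∈ Finset.range n, (j:ℝ)^q) + (n:ℝ)^q := by
      have h2 : (∑ i ∈ Finset.Ico 0 n, ((i + 1 : ℕ):ℝ)^q)
          = ∑ j ∈ Finset.Ico 1 (n+1), (j:ℝ)^q := by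
        rw [← Finset.sum_Ico_add' (fun j : ℕ => (j:ℝ)^q) 0 n 1]
      have htop := Finset.sum_Ico_succ_top (by omega : 1 ≤ n) (fun j : ℕ => (j:ℝ)^q)
      rw [h2, htop, hrange]
    rw [hl2] at hlow
    rw [hshift] at hupp
    rw [abs_le]
    constructor <;> linarith

lemma tendsto_sum_range_rpow_div (q : ℝ) (hq : -1 < q) (hq0 : q ≠ 0) :
    Tendsto (fun n : ℕ => (∑ j ∈ Finset.range n, (j:ℝ)^q) / (n:ℝ)^(q+1))
      atTop (nhds (1/(q+1))) := by
  have hq1 : (0:ℝ) < q + 1 := by linarith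
  rw [← tendsto_sub_nhds_zero_iff]
  apply squeeze_zero_norm' (a := fun n : ℕ => (1/(q+1) + 1) * (n:ℝ)^(-(q+1)) + (n:ℝ)⁻¹)
  · filter_upwards [eventually_ge_atTop 1] with n hn
    have hnpos : (0:ℝ) < (n:ℝ) := by exact_mod_cast hn
    have hpow : (0:ℝ) < (n:ℝ)^(q+1) := Real.rpow_pos_of_pos hnpos _
    have hb := sum_range_rpow_sub_bound q hq hq0 n hn
    have key : ((∑ j ∈ Finset.range n, (j:ℝ)^q) / (n:ℝ)^(q+1) - 1/(q+1))
        = ((∑ j ∈ Finset.range n, (j:ℝ)^q) - (n:ℝ)^(q+1)/(q+1)) / (n:ℝ)^(q+1) := by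
      rw [eq_div_iff hpow.ne', sub_mul, div_mul_cancel₀ _ hpow.ne', one_div_mul_eq_div]
    rw [Real.norm_eq_abs, key, abs_div, abs_of_pos hpow]
    rw [div_le_iff₀ hpow]
    have e1 : (n:ℝ)^(-(q+1)) * (n:ℝ)^(q+1) = 1 := by
      rw [← Real.rpow_add hnpos, neg_add_cancel, Real.rpow_zero]
    have e2 : (n:ℝ)⁻¹ * (n:ℝ)^(q+1) = (n:ℝ)^q := by
      rw [← Real.rpow_neg_one (n:ℝ), ← Real.rpow_add hnpos]
      congr 1; ring
    calc |(∑ j ∈ Finset.range n, (j:ℝ)^q) - (n:ℝ)^(q+1)/(q+1)|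
        ≤ 1/(q+1) + 1 + (n:ℝ)^q := hb
      _ = (1/(q+1) + 1) * 1 + (n:ℝ)^q := by ring
      _ = ((1/(q+1) + 1) * ((n:ℝ)^(-(q+1)) * (n:ℝ)^(q+1)) + (n:ℝ)⁻¹ * (n:ℝ)^(q+1)) := by
          rw [e1, e2]
      _ = ((1/(q+1) + 1) * (n:ℝ)^(-(q+1)) + (n:ℝ)⁻¹) * (n:ℝ)^(q+1) := by ring
  · have h1 : Tendsto (fun n : ℕ => (n:ℝ)^(-(q+1))) atTop (nhds 0) :=
      (tendsto_rpow_neg_atTop hq1).comp tendsto_natCast_atTop_atTop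
    have h2 : Tendsto (fun n : ℕ => (n:ℝ)⁻¹) atTop (nhds 0) :=
      tendsto_inv_atTop_zero.comp tendsto_natCast_atTop_atTop
    have := ((h1.const_mul (1/(q+1) + 1)).add h2)
    simpa using this

lemma toeplitz_rpow (q : ℝ) (hq : -1 < q) (hq0 : q ≠ 0) (c : ℕ → ℝ) (L : ℝ)
    (hc : Tendsto c atTop (nhds L)) :
    Tendsto (fun n : ℕ => (∑ j ∈ Finset.range n, c j * (j:ℝ)^q) / (n:ℝ)^(q+1))
      atTop (nhds (L/(q+1))) := by
  have hq1 : (0:ℝ) < q + 1 := by linarith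
  have hg := tendsto_sum_range_rpow_div q hq hq0
  have hpow : Tendsto (fun n : ℕ => (n:ℝ)^(q+1)) atTop atTop :=
    (tendsto_rpow_atTop hq1).comp tendsto_natCast_atTop_atTop
  have hGtop : Tendsto (fun n : ℕ => ∑ j ∈ Finset.range n, (j:ℝ)^q) atTop atTop := by
    have hm := Filter.Tendsto.pos_mul_atTop (by positivity : (0:ℝ) < 1/(q+1)) hg hpow
    apply hm.congr'
    filter_upwards [eventually_ge_atTop 1] with n hn
    have hnpos : (0:ℝ) < (n:ℝ) := by exact_mod_cast hn
    have hP : (n:ℝ)^(q+1) ≠ 0 := (Real.rpow_pos_of_pos hnpos _).ne'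
    field_simp
  have h1 : (fun j : ℕ => c j - L) =o[atTop] (fun _ : ℕ => (1:ℝ)) :=
    (Asymptotics.isLittleO_one_iff ℝ).2 (tendsto_sub_nhds_zero_iff.2 hc)
  have h2 : (fun j : ℕ => (c j - L) * (j:ℝ)^q) =o[atTop] (fun j : ℕ => (j:ℝ)^q) := by
    have := h1.mul_isBigO (Asymptotics.isBigO_refl (fun j : ℕ => (j:ℝ)^q) atTop)
    simpa using this
  have h3 := h2.sum_range (fun i => Real.rpow_nonneg (Nat.cast_nonneg i) q) hGtop
  have h4 : (fun n : ℕ => ∑ j ∈ Finset.range n, (j:ℝ)^q) =O[atTop]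
      (fun n : ℕ => (n:ℝ)^(q+1)) := by
    have hb := hg.isBigO_one ℝ
    have := hb.mul (Asymptotics.isBigO_refl (fun n : ℕ => (n:ℝ)^(q+1)) atTop)
    apply this.congr' _ (by simp)
    filter_upwards [eventually_ge_atTop 1] with n hn
    have hnpos : (0:ℝ) < (n:ℝ) := by exact_mod_cast hn
    have : (n:ℝ)^(q+1) ≠ 0 := (Real.rpow_pos_of_pos hnpos _).ne'
    field_simp
  have h5 := h3.trans_isBigO h4
  have h6 : Tendsto (fun n : ℕ =>
      (∑ j ∈ Finset.range n, (c j - L) * (j:ℝ)^q) / (n:ℝ)^(q+1)) atTop (nhds 0) := by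
    apply h5.tendsto_div_nhds_zero
  have h7 := h6.add (hg.const_mul L)
  rw [zero_add] at h7
  have hval : L * (1/(q+1)) = L/(q+1) := by ring
  rw [hval] at h7
  apply h7.congr'
  filter_upwards [eventually_ge_atTop 1] with n hn
  have hnpos : (0:ℝ) < (n:ℝ) := by exact_mod_cast hn
  have hP : (n:ℝ)^(q+1) ≠ 0 := (Real.rpow_pos_of_pos hnpos _).ne'
  have hsum : (∑ j ∈ Finset.range n, (c j - L) * (j:ℝ)^q)
      = (∑ j ∈ Finset.range n, c j * (j:ℝ)^q) - L * ∑ j ∈ Finset.range n, (j:ℝ)^q := by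
    rw [Finset.mul_sum, ← Finset.sum_sub_distrib]
    congr 1; ext j; ring
  rw [hsum]
  field_simp
  ring

lemma fold_sym (g : ℤ → ℝ) (hg : ∀ k, g (-k) = g k) (T : ℕ) (hT : 1 ≤ T) :
    ∑ k ∈ Finset.Icc (1 - (T:ℤ)) ((T:ℤ) - 1), g k
      = g 0 + 2 * ∑ j ∈ Finset.Ico 1 T, g (j:ℤ) := by
  have hT' : (1:ℤ) ≤ (T:ℤ) := by exact_mod_cast hT
  have h1 : Finset.Icc (1 - (T:ℤ)) ((T:ℤ) - 1) = Finset.Ico (1 - (T:ℤ)) (T:ℤ) := by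
    ext k; simp only [Finset.mem_Icc, Finset.mem_Ico]; omega
  rw [h1, ← Finset.Ico_union_Ico_eq_Ico (by omega : 1 - (T:ℤ) ≤ 0) (by omega : (0:ℤ) ≤ T),
    Finset.sum_union (Finset.Ico_disjoint_Ico_consecutive _ _ _)]
  have hneg : ∑ k ∈ Finset.Ico (1 - (T:ℤ)) 0, g k = ∑ k ∈ Finset.Ico (1:ℤ) (T:ℤ), g k := by
    refine Finset.sum_nbij' (fun k => -k) (fun k => -k) ?_ ?_ ?_ ?_ ?_
    · intro a ha; simp only [Finset.mem_Ico] at *; omega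
    · intro a ha; simp only [Finset.mem_Ico] at *; omega
    · intro a _; ring
    · intro a _; ring
    · intro a _; rw [hg]
  have hzero : ∑ k ∈ Finset.Ico (0:ℤ) (T:ℤ), g k
      = g 0 + ∑ k ∈ Finset.Ico (1:ℤ) (T:ℤ), g k := by
    rw [← Finset.Ico_union_Ico_eq_Ico (by omega : (0:ℤ) ≤ 1) hT',
      Finset.sum_union (Finset.Ico_disjoint_Ico_consecutive _ _ _)]
    have : Finset.Ico (0:ℤ) 1 = {0} := by ext k; simp; omega
    rw [this, Finset.sum_singleton]
  have hcast : ∑ k ∈ Finset.Ico (1:ℤ) (T:ℤ), g k = ∑ j ∈ Finset.Ico 1 T, g (j:ℤ) := by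
    refine (Finset.sum_nbij' (fun j : ℕ => (j:ℤ)) (fun k : ℤ => k.toNat) ?_ ?_ ?_ ?_ ?_).symm
    · intro a ha; simp only [Finset.mem_Ico] at *; omega
    · intro a ha; simp only [Finset.mem_Ico] at *; omega
    · intro a _; simp
    · intro a ha
      simp only [Finset.mem_Ico] at ha
      simp [Int.toNat_of_nonneg (by omega : (0:ℤ) ≤ a)]
    · intro a _; rfl
  rw [hneg, hzero, hcast]
  ring

/-- Long-memory asymptotics of the sample-mean variance: if `γ(k) ~ C k^{2d-1}` with
`C > 0`, `d ∈ (0,1/2)`, and `γ` symmetric, then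
`T^{1-2d} · (1/T) ∑_{k=1-T}^{T-1}(1-|k|/T)γ(k) → 2C/(2d(2d+1))`. -/
theorem long_memory_var_mean_asymptotics (γ : ℤ → ℝ) (hsym : ∀ k : ℤ, γ (-k) = γ k)
    (C d : ℝ) (hC : 0 < C) (hd0 : 0 < d) (hd1 : d < 1/2)
    (hasymp : Tendsto (fun k : ℕ => γ (k : ℤ) / (k : ℝ) ^ (2 * d - 1)) atTop (nhds C)) :
    Tendsto (fun T : ℕ => (T : ℝ) ^ (1 - 2 * d) *
        ((1 / (T : ℝ)) * ∑ k ∈ Finset.Icc (1 - (T : ℤ)) ((T : ℤ) - 1),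
          (1 - |(k : ℝ)| / (T : ℝ)) * γ k))
      atTop (nhds (2 * C / (2 * d * (2 * d + 1)))) := by
  set c : ℕ → ℝ := fun j => γ (j:ℤ) / (j:ℝ)^(2*d-1) with hc
  have h2d : (0:ℝ) < 2*d := by linarith
  have hq1a : (-1:ℝ) < 2*d-1 := by linarith
  have hq1b : (2*d-1 : ℝ) ≠ 0 := ne_of_lt (by linarith)
  have hq2b : (2*d : ℝ) ≠ 0 := ne_of_gt h2d
  have h₁ := toeplitz_rpow (2*d-1) hq1a hq1b c C hasymp
  rw [show 2*d-1+1 = 2*d from by ring] at h₁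
  have h₂ := toeplitz_rpow (2*d) (by linarith) hq2b c C hasymp
  have key := (((tendsto_rpow_neg_atTop h2d).comp
    tendsto_natCast_atTop_atTop).const_mul (γ 0)).add ((h₁.sub h₂).const_mul 2)
  have hval : γ 0 * 0 + 2 * (C/(2*d) - C/(2*d+1)) = 2*C/(2*d*(2*d+1)) := by
    field_simp
    ring
  rw [hval] at key
  apply key.congr'
  filter_upwards [eventually_ge_atTop 1] with T hT
  have ht : (0:ℝ) < (T:ℝ) := by exact_mod_cast hT
  have hu : (0:ℝ) < (T:ℝ)^(2*d) := Real.rpow_pos_of_pos ht _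
  -- fold the symmetric sum
  have hg : ∀ k : ℤ, (1 - |((-k:ℤ):ℝ)| / (T:ℝ)) * γ (-k) = (1 - |(k:ℝ)| / (T:ℝ)) * γ k := by
    intro k
    rw [hsym]
    push_cast
    rw [abs_neg]
  have hfold := fold_sym (fun k : ℤ => (1 - |(k:ℝ)| / (T:ℝ)) * γ k) hg T hT
  -- rewrite the inner ℕ-sum
  have hsummand : ∑ j ∈ Finset.Ico 1 T, (1 - |((j:ℤ):ℝ)| / (T:ℝ)) * γ (j:ℤ)
      = (∑ j ∈ Finset.Ico 1 T, c j * (j:ℝ)^(2*d-1))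
        - (1/(T:ℝ)) * ∑ j ∈ Finset.Ico 1 T, c j * (j:ℝ)^(2*d) := by
    rw [Finset.mul_sum, ← Finset.sum_sub_distrib]
    refine Finset.sum_congr rfl ?_
    intro j hj
    simp only [Finset.mem_Ico] at hj
    have hjpos : (0:ℝ) < (j:ℝ) := by exact_mod_cast hj.1
    have hjp : (0:ℝ) < (j:ℝ)^(2*d-1) := Real.rpow_pos_of_pos hjpos _
    have e1 : c j * (j:ℝ)^(2*d-1) = γ (j:ℤ) := by
      rw [hc]
      exact div_mul_cancel₀ _ hjp.ne'
    have e2 : c j * (j:ℝ)^(2*d) = γ (j:ℤ) * (j:ℝ) := by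
      rw [hc, show (2*d : ℝ) = (2*d-1) + 1 from by ring, Real.rpow_add_one hjpos.ne']
      field_simp
      ring
    rw [e1, e2]
    have habs : |((j:ℤ):ℝ)| = (j:ℝ) := by
      push_cast
      exact abs_of_nonneg hjpos.le
    push_cast
    rw [abs_of_nonneg (by positivity : (0:ℝ) ≤ (j:ℝ))]
    ring
  -- convert range sums to Ico sums
  have hS1 : ∑ j ∈ Finset.range T, c j * (j:ℝ)^(2*d-1)
      = ∑ j ∈ Finset.Ico 1 T, c j * (j:ℝ)^(2*d-1) := by
    rw [Finset.range_eq_Ico]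
    refine (Finset.sum_subset (Finset.Ico_subset_Ico (by norm_num) le_rfl) ?_).symm
    intro x hx hnx
    have : x = 0 := by simp only [Finset.mem_Ico] at hx hnx; omega
    simp [this, Real.zero_rpow hq1b]
  have hS2 : ∑ j ∈ Finset.range T, c j * (j:ℝ)^(2*d)
      = ∑ j ∈ Finset.Ico 1 T, c j * (j:ℝ)^(2*d) := by
    rw [Finset.range_eq_Ico]
    refine (Finset.sum_subset (Finset.Ico_subset_Ico (by norm_num) le_rfl) ?_).symm
    intro x hx hnx
    have : x = 0 := by simp only [Finset.mem_Ico] at hx hnx; omega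
    simp [this, Real.zero_rpow hq2b]
  set S1 : ℝ := ∑ j ∈ Finset.Ico 1 T, c j * (j:ℝ)^(2*d-1) with hS1d
  set S2 : ℝ := ∑ j ∈ Finset.Ico 1 T, c j * (j:ℝ)^(2*d) with hS2d
  simp only [Function.comp]
  rw [hS1, hS2, hfold, hsummand]
  simp only [Int.cast_zero, abs_zero, zero_div, sub_zero, one_mul]
  -- pure algebra with rpow
  have e3 : (T:ℝ)^(-(2*d)) = ((T:ℝ)^(2*d))⁻¹ := Real.rpow_neg ht.le _
  have e4 : (T:ℝ)^(2*d+1) = (T:ℝ)^(2*d) * (T:ℝ) := by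
    rw [Real.rpow_add ht, Real.rpow_one]
  have e5 : (T:ℝ)^(1-2*d) = (T:ℝ) / (T:ℝ)^(2*d) := by
    rw [eq_div_iff hu.ne', ← Real.rpow_add ht]
    norm_num
  rw [e3, e4, e5]
  field_simp
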